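/- arXiv:1405.0568 — 7 statements merged into one kernel-verified Lean document; each statement's English description precedes it below -/
import Mathlib

section
/- For every natural number n ≥ 1 and every subgroup G of ℤ^n, the set G, viewed as a subset of n-tuples of integers, is definable without parameters in the structure (ℤ, +, 0); that is, there is a first-order formula φ(x₁,…,xₙ) in the language L such that G = {(a₁,…,aₙ) ∈ ℤⁿ : (ℤ,+,0) ⊨ φ(a₁,…,aₙ)}. -/
open FirstOrder

/-- The first-order language with one binary function symbol and one constant symbol. -/
def grpLang : FirstOrder.Language where
  Functions n :=
    match n with
    | 0 => Unit
    | 2 => Unit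
    | _ => Empty
  Relations _ := Empty

/-- Any additive commutative group, in particular `ℤ` and its powers, viewed as a
`grpLang`-structure interpreting the binary function symbol as addition and the
constant symbol as `0`. -/
instance grpLangStructure (M : Type*) [AddCommGroup M] : grpLang.Structure M where
  funMap {n} f x :=
    match n, f with
    | 0, _ => 0
    | 2, _ => x 0 + x 1
    | 1, f => f.elim
    | _ + 3, f => f.elim
  RelMap {n} r := r.elim

namespace GrpLangAux

open FirstOrder.Language

variable {α : Type*}

/-- The zero term. -/
def zeroT : grpLang.Term α := Term.func (l := 0) () ![]

/-- Addition of two terms. -/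
def addT (t s : grpLang.Term α) : grpLang.Term α := Term.func (l := 2) () ![t, s]

/-- `k`-fold sum of a term. -/
def nsmulT (k : ℕ) (t : grpLang.Term α) : grpLang.Term α :=
  Nat.rec zeroT (fun _ s => addT t s) k

/-- Sum of a finite family of terms. -/
def sumT : ∀ {m : ℕ}, (Fin m → grpLang.Term α) → grpLang.Term α
  | 0, _ => zeroT
  | _ + 1, f => addT (f 0) (sumT fun i => f i.succ)

variable {M : Type*} [AddCommGroup M] (v : α → M)

@[simp] lemma realize_zeroT : (zeroT : grpLang.Term α).realize v = 0 := rfl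

@[simp] lemma realize_addT (t s : grpLang.Term α) :
    (addT t s).realize v = t.realize v + s.realize v := by
  rfl

@[simp] lemma realize_nsmulT (k : ℕ) (t : grpLang.Term α) :
    (nsmulT k t).realize v = k • t.realize v := by
  induction k with
  | zero => simp [nsmulT]
  | succ k ih =>
    show (addT t (nsmulT k t)).realize v = _
    rw [realize_addT, ih, succ_nsmul]
    abel

@[simp] lemma realize_sumT : ∀ {m : ℕ} (f : Fin m → grpLang.Term α),
    (sumT f).realize v = ∑ i, (f i).realize v
  | 0, f => by simp [sumT]
  | m + 1, f => by
    rw [sumT, realize_addT, realize_sumT, Fin.sum_univ_succ]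

/-- The solution set of a homogeneous linear equation with natural-number
coefficients on both sides is definable. -/
lemma definable_nat_eq {m : ℕ} (a b : Fin m → ℕ) :
    Set.Definable (∅ : Set ℤ) grpLang
      {z : Fin m → ℤ | ∑ i, (a i : ℤ) * z i = ∑ i, (b i : ℤ) * z i} := by
  rw [Set.empty_definable_iff]
  refine ⟨Term.equal (sumT fun i => nsmulT (a i) (Term.var i))
      (sumT fun i => nsmulT (b i) (Term.var i)), ?_⟩
  ext z
  simp [Formula.realize_equal, mul_comm]

/-- The solution set of a homogeneous linear equation with integer
coefficients is definable. -/
lemma definable_int_eq {m : ℕ} (c : Fin m → ℤ) :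
    Set.Definable (∅ : Set ℤ) grpLang {z : Fin m → ℤ | ∑ i, c i * z i = 0} := by
  have h := definable_nat_eq (fun i => (c i).toNat) (fun i => (-(c i)).toNat)
  have hsum : ∀ z : Fin m → ℤ,
      ∑ i, c i * z i = ∑ i, ((c i).toNat : ℤ) * z i - ∑ i, ((-(c i)).toNat : ℤ) * z i := by
    intro z
    rw [← Finset.sum_sub_distrib]
    refine Finset.sum_congr rfl fun i _ => ?_
    rw [← sub_mul]
    congr 1
    omega
  have hset : {z : Fin m → ℤ | ∑ i, c i * z i = 0} =
      {z : Fin m → ℤ | ∑ i, ((c i).toNat : ℤ) * z i = ∑ i, ((-(c i)).toNat : ℤ) * z i} := by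
    ext z
    rw [Set.mem_setOf_eq, Set.mem_setOf_eq, hsum, sub_eq_zero]
  rw [hset]
  exact h

end GrpLangAux

/-- Every subgroup of `ℤ^n`, viewed as a set of `n`-tuples of integers, is definable
without parameters in the structure `(ℤ, +, 0)`. -/
theorem subgroup_definable_in_int (n : ℕ) (hn : 1 ≤ n) (G : AddSubgroup (Fin n → ℤ)) :
    Set.Definable (∅ : Set ℤ) grpLang (G : Set (Fin n → ℤ)) := by
  classical
  obtain ⟨k, v, hv⟩ := Submodule.fg_iff_exists_fin_generating_family.1
    (IsNoetherian.noetherian (G.toIntSubmodule))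
  -- coefficients of the `j`-th linear equation
  set c : Fin n → Fin (n + k) → ℤ := fun j =>
    Fin.addCases (fun j' => if j' = j then -1 else 0) (fun i => v i j) with hc
  set S : Set (Fin (n + k) → ℤ) :=
    ⋂ j : Fin n, {z : Fin (n + k) → ℤ | ∑ t, c j t * z t = 0} with hS
  have hSdef : Set.Definable (∅ : Set ℤ) grpLang S := by
    have : S = ⋂ j ∈ (Finset.univ : Finset (Fin n)),
        {z : Fin (n + k) → ℤ | ∑ t, c j t * z t = 0} := by
      simp [hS]
    rw [this]
    exact Set.definable_biInter_finset (fun j => GrpLangAux.definable_int_eq (c j)) _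
  have key : ∀ (j : Fin n) (z : Fin (n + k) → ℤ),
      ∑ t, c j t * z t = -(z (Fin.castAdd k j)) + ∑ i, z (Fin.natAdd n i) * v i j := by
    intro j z
    rw [Fin.sum_univ_add]
    congr 1
    · simp [hc, Finset.sum_ite_eq']
    · refine Finset.sum_congr rfl fun i _ => ?_
      simp [hc, mul_comm]
  have himg : (fun z : Fin (n + k) → ℤ => z ∘ Fin.castAdd k) '' S = (G : Set (Fin n → ℤ)) := by
    ext x
    constructor
    · rintro ⟨z, hz, rfl⟩
      simp only [hS, Set.mem_iInter, Set.mem_setOf_eq] at hz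
      show z ∘ Fin.castAdd k ∈ (G : Set (Fin n → ℤ))
      have : z ∘ Fin.castAdd k = ∑ i, z (Fin.natAdd n i) • v i := by
        funext j
        have := hz j
        rw [key j z] at this
        have hx : z (Fin.castAdd k j) = ∑ i, z (Fin.natAdd n i) * v i j := by linarith
        simpa [Fintype.sum_apply] using hx
      rw [this]
      have : (∑ i, z (Fin.natAdd n i) • v i) ∈ G.toIntSubmodule := by
        rw [← hv]
        exact Submodule.sum_mem _ fun i _ =>
          Submodule.smul_mem _ _ (Submodule.subset_span ⟨i, rfl⟩)
      exact this
    · intro hx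
      have hx' : x ∈ G.toIntSubmodule := hx
      rw [← hv] at hx'
      obtain ⟨f, hf⟩ := (Submodule.mem_span_range_iff_exists_fun ℤ).1 hx'
      refine ⟨Fin.addCases x f, ?_, ?_⟩
      · simp only [hS, Set.mem_iInter, Set.mem_setOf_eq]
        intro j
        rw [key j]
        simp only [Fin.addCases_left, Fin.addCases_right]
        have := congrFun hf j
        simp only [Fintype.sum_apply, Pi.smul_apply, smul_eq_mul] at this
        linarith
      · funext j
        simp
  rw [← himg]
  exact hSdef.image_comp _
end

section
/- For every natural number n ≥ 2 and every subgroup G of ℤ^n that is nontrivial (G ≠ {0}) and of infinite index in ℤ^n, the set G is not definable, even allowing parameters from ℤ^n, in the structure (ℤ^n, +, 0). -/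
open FirstOrder

section QE
def lsum {n k : ℕ} (a : Fin k → ℤ) (xs : Fin k → Fin n → ℤ) : Fin n → ℤ := ∑ i, a i • xs i
structure Lit (n k : ℕ) where
  sign : Bool
  a : Fin k → ℤ
  c : Fin n → ℤ
  d : ℤ
variable {n k : ℕ}
namespace Lit
def posSet (l : Lit n k) : Set (Fin k → Fin n → ℤ) :=
  {v | ∃ w : Fin n → ℤ, lsum l.a v = l.c + l.d • w}
def set (l : Lit n k) : Set (Fin k → Fin n → ℤ) :=
  if l.sign then l.posSet else l.posSetᶜ
def e (l : Lit n (k+1)) : ℤ := l.a (Fin.last k)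
def drop (l : Lit n (k+1)) : Fin k → ℤ := fun i => l.a i.castSucc
/-- substituted literal -/
def subst (l : Lit n (k+1)) (e' : ℤ) (a' : Fin k → ℤ) (c' : Fin n → ℤ) : Lit n k :=
  ⟨l.sign, fun i => e' * l.drop i - l.e * a' i, e' • l.c - l.e • c', e' * l.d⟩
end Lit
lemma lsum_snoc (a : Fin (k+1) → ℤ) (xs : Fin k → Fin n → ℤ) (z : Fin n → ℤ) :
    lsum a (Fin.snoc xs z) = lsum (fun i => a i.castSucc) xs + a (Fin.last k) • z := by
  rw [lsum, Fin.sum_univ_castSucc, lsum]; simp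
lemma mem_posSet_snoc (l : Lit n (k+1)) (xs : Fin k → Fin n → ℤ) (z : Fin n → ℤ) :
    Fin.snoc xs z ∈ l.posSet ↔ ∃ w, lsum l.drop xs + l.e • z = l.c + l.d • w := by
  unfold Lit.posSet
  rw [Set.mem_setOf_eq]
  constructor <;> (rintro ⟨w, hw⟩; refine ⟨w, ?_⟩)
  · rw [lsum_snoc] at hw; exact hw
  · rw [lsum_snoc]; exact hw
lemma lsum_mul_sub (p q : ℤ) (a b : Fin k → ℤ) (xs : Fin k → Fin n → ℤ) :
    lsum (fun i => p * a i - q * b i) xs = p • lsum a xs - q • lsum b xs := by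
  unfold lsum
  rw [Finset.smul_sum, Finset.smul_sum, ← Finset.sum_sub_distrib]
  congr 1
  funext i
  rw [sub_smul, mul_smul, mul_smul]

/-- Key substitution lemma. -/
lemma mem_subst_iff (l : Lit n (k+1)) {e' : ℤ} (he' : e' ≠ 0) {a' : Fin k → ℤ}
    {c' : Fin n → ℤ} {xs : Fin k → Fin n → ℤ} {z : Fin n → ℤ}
    (hz : e' • z = c' - lsum a' xs) :
    Fin.snoc xs z ∈ l.set ↔ xs ∈ (l.subst e' a' c').set := by
  have key : Fin.snoc xs z ∈ l.posSet ↔ xs ∈ (l.subst e' a' c').posSet := by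
    rw [mem_posSet_snoc]
    unfold Lit.posSet Lit.subst
    rw [Set.mem_setOf_eq]
    show (∃ w, lsum l.drop xs + l.e • z = l.c + l.d • w) ↔
      ∃ w, lsum (fun i => e' * l.drop i - l.e * a' i) xs
        = (e' • l.c - l.e • c') + (e' * l.d) • w
    rw [show (lsum (fun i => e' * l.drop i - l.e * a' i) xs
        = e' • lsum l.drop xs - l.e • lsum a' xs) from lsum_mul_sub _ _ _ _ _]
    constructor <;> rintro ⟨w, hw⟩ <;> refine ⟨w, ?_⟩
    · linear_combination (norm := module) e' • hw - l.e • hz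
    · have h2 : e' • (lsum l.drop xs + l.e • z) = e' • (l.c + l.d • w) := by
        linear_combination (norm := module) hw + l.e • hz
      exact smul_right_injective _ he' h2
  unfold Lit.set Lit.subst
  show _ ↔ xs ∈ (if l.sign then _ else _)
  cases l.sign <;> simp only [if_true, if_false, Bool.false_eq_true, Set.mem_compl_iff]
  · exact not_congr key
  · exact key

lemma proj_cell_A {κ : Type} (f : κ → Lit n (k+1)) (j' : κ)
    (hsign : (f j').sign = true) (hd : (f j').d = 0) (he : (f j').e ≠ 0) :
    {xs | ∃ z, ∀ j, Fin.snoc xs z ∈ (f j).set}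
      = ⋂ (o : Option κ),
          (o.elim (⟨true, (f j').drop, (f j').c, -(f j').e⟩ : Lit n k)
            (fun j => (f j).subst (f j').e (f j').drop (f j').c)).set := by
  ext xs
  simp only [Set.mem_setOf_eq, Set.mem_iInter]
  constructor
  · rintro ⟨z, hz⟩
    have hstar : Fin.snoc xs z ∈ (f j').posSet := by
      have := hz j'
      rwa [Lit.set, hsign, if_pos rfl] at this
    obtain ⟨w, hw⟩ := (mem_posSet_snoc _ _ _).mp hstar
    rw [hd, zero_smul, add_zero] at hw
    have hzz : (f j').e • z = (f j').c - lsum (f j').drop xs := by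
      linear_combination (norm := module) hw
    intro o
    cases o with
    | none =>
      simp only [Option.elim]
      rw [Lit.set, if_pos rfl]
      exact ⟨z, by linear_combination (norm := module) hzz⟩
    | some j =>
      simpa only [Option.elim] using (mem_subst_iff (f j) he hzz).mp (hz j)
  · intro h
    have h0 := h none
    simp only [Option.elim] at h0
    rw [Lit.set, if_pos rfl] at h0
    obtain ⟨w, hw⟩ := h0
    have hzz : (f j').e • w = (f j').c - lsum (f j').drop xs := by
      linear_combination (norm := module) hw
    refine ⟨w, fun j => (mem_subst_iff (f j) he hzz).mpr ?_⟩
    simpa only [Option.elim] using h (some j)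

/-- Shift lemma: when `d ∣ e * N`, the bound variable can be reduced to its residue. -/
lemma shift_iff {e d N : ℤ} (hdvd : d ∣ e * N) (t c ρ z' : Fin n → ℤ) :
    (∃ w, t + e • (ρ + N • z') = c + d • w) ↔ (∃ w, t = (c - e • ρ) + d • w) := by
  obtain ⟨r, hr⟩ := hdvd
  have h2 : (e * N) • z' = d • (r • z') := by rw [hr, mul_smul]
  constructor <;> rintro ⟨w, hw⟩
  · refine ⟨w - r • z', ?_⟩
    linear_combination (norm := module) hw - h2
  · refine ⟨w + r • z', ?_⟩
    linear_combination (norm := module) hw + h2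

/-- Avoidance lemma: finitely many nondegenerate equations can be simultaneously avoided. -/
lemma avoid (hn : 0 < n) {κ : Type} [Fintype κ] (P : κ → Prop) (g : κ → ℤ)
    (u : κ → Fin n → ℤ) (hP : ∀ j, P j → g j ≠ 0) :
    ∃ z' : Fin n → ℤ, ∀ j, P j → g j • z' ≠ u j := by
  classical
  haveI : Infinite (Fin n → ℤ) :=
    Infinite.of_injective (fun t _ => t) (fun s t e => congrFun e ⟨0, hn⟩)
  have hfin : Set.Finite (⋃ j, {z' : Fin n → ℤ | P j ∧ g j • z' = u j}) := by
    refine Set.finite_iUnion fun j => Set.Subsingleton.finite ?_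
    rintro x ⟨hPj, hx⟩ y ⟨-, hy⟩
    exact smul_right_injective _ (hP j hPj) (hx.trans hy.symm)
  obtain ⟨z', hz'⟩ := hfin.infinite_compl.nonempty
  refine ⟨z', fun j hPj hj => ?_⟩
  exact hz' (Set.mem_iUnion.mpr ⟨j, hPj, hj⟩)

/-- Residue decomposition. -/
lemma residue {N : ℕ} (hN : 0 < N) (z : Fin n → ℤ) :
    ∃ (ρ : Fin n → Fin N) (z' : Fin n → ℤ),
      z = (fun i => ((ρ i : ℕ) : ℤ)) + (N : ℤ) • z' := by
  have hNne : (N : ℤ) ≠ 0 := by exact_mod_cast hN.ne'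
  have hNpos : (0 : ℤ) < N := by exact_mod_cast hN
  refine ⟨fun i => ⟨(z i % (N : ℤ)).toNat, ?_⟩, fun i => z i / (N : ℤ), ?_⟩
  · have h1 : 0 ≤ z i % (N : ℤ) := Int.emod_nonneg _ hNne
    have h2 : z i % (N : ℤ) < N := Int.emod_lt_of_pos _ hNpos
    omega
  · funext i
    have h1 : 0 ≤ z i % (N : ℤ) := Int.emod_nonneg _ hNne
    have h3 : z i % (N : ℤ) + (N : ℤ) * (z i / (N : ℤ)) = z i := Int.emod_add_mul_ediv _ _
    simp only [Pi.add_apply, Pi.smul_apply, smul_eq_mul]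
    omega

lemma proj_cell_B (hn : 0 < n) {κ : Type} [Fintype κ] (f : κ → Lit n (k+1))
    (hA : ∀ j, (f j).sign = true → (f j).e ≠ 0 → (f j).d ≠ 0) :
    ∃ (N : ℕ) (_ : 0 < N) (g : (Fin n → Fin N) → κ → Lit n k),
      {xs | ∃ z, ∀ j, Fin.snoc xs z ∈ (f j).set} = ⋃ ρ, ⋂ j, (g ρ j).set := by
  classical
  set M : ℤ := ∏ j ∈ Finset.univ.filter (fun j => (f j).d ≠ 0), (f j).d with hM
  have hMne : M ≠ 0 := Finset.prod_ne_zero_iff.mpr (fun j hj => (Finset.mem_filter.mp hj).2)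
  set N : ℕ := M.natAbs with hNdef
  have hN : 0 < N := Int.natAbs_pos.mpr hMne
  have hdvdN : ∀ j, (f j).d ≠ 0 → (f j).d ∣ (N : ℤ) := by
    intro j hj
    refine Int.dvd_natAbs.mpr (Finset.dvd_prod_of_mem _ ?_)
    simp [hj]
  set lift : (Fin n → Fin N) → (Fin n → ℤ) := fun ρ i => ((ρ i : ℕ) : ℤ) with hlift
  have key : ∀ (j : κ) (ρ : Fin n → Fin N) (z' : Fin n → ℤ) (xs : Fin k → Fin n → ℤ),
      ¬((f j).e ≠ 0 ∧ (f j).d = 0) →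
      (Fin.snoc xs (lift ρ + (N : ℤ) • z') ∈ (f j).set ↔
        xs ∈ (⟨(f j).sign, (f j).drop, (f j).c - (f j).e • lift ρ, (f j).d⟩ : Lit n k).set) := by
    intro j ρ z' xs hj
    have hdvd : (f j).d ∣ (f j).e * (N : ℤ) := by
      rcases not_and_or.mp hj with he | hd
      · push_neg at he
        rw [he, zero_mul]
        exact dvd_zero _
      · push_neg at hd
        exact Dvd.dvd.mul_left (hdvdN j hd) _
    have base : Fin.snoc xs (lift ρ + (N : ℤ) • z') ∈ (f j).posSet ↔
        xs ∈ (⟨(f j).sign, (f j).drop, (f j).c - (f j).e • lift ρ, (f j).d⟩ : Lit n k).posSet := by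
      rw [mem_posSet_snoc]
      show _ ↔ ∃ w, lsum (f j).drop xs = ((f j).c - (f j).e • lift ρ) + (f j).d • w
      exact shift_iff hdvd _ _ _ _
    unfold Lit.set
    have hsg : (⟨(f j).sign, (f j).drop, (f j).c - (f j).e • lift ρ, (f j).d⟩ : Lit n k).sign
        = (f j).sign := rfl
    rw [hsg]
    cases (f j).sign <;> simp only [if_true, if_false, Bool.false_eq_true, Set.mem_compl_iff]
    · exact not_congr base
    · exact base
  refine ⟨N, hN, fun ρ j =>
    if (f j).e ≠ 0 ∧ (f j).d = 0 then (⟨true, 0, 0, 1⟩ : Lit n k)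
    else ⟨(f j).sign, (f j).drop, (f j).c - (f j).e • lift ρ, (f j).d⟩, ?_⟩
  ext xs
  simp only [Set.mem_setOf_eq, Set.mem_iUnion, Set.mem_iInter]
  constructor
  · rintro ⟨z, hz⟩
    obtain ⟨ρ, z', rfl⟩ := residue hN z
    refine ⟨ρ, fun j => ?_⟩
    by_cases hj : (f j).e ≠ 0 ∧ (f j).d = 0
    · rw [if_pos hj, Lit.set, if_pos rfl]
      exact ⟨0, by simp [lsum]⟩
    · rw [if_neg hj]
      exact (key j ρ z' xs hj).mp (hz j)
  · rintro ⟨ρ, hρ⟩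
    obtain ⟨z', hz'⟩ := avoid hn (fun j => (f j).e ≠ 0 ∧ (f j).d = 0)
      (fun j => (f j).e * N)
      (fun j => (f j).c - lsum (f j).drop xs - (f j).e • lift ρ)
      (fun j hj => mul_ne_zero hj.1 (by exact_mod_cast hN.ne'))
    refine ⟨lift ρ + (N : ℤ) • z', fun j => ?_⟩
    by_cases hj : (f j).e ≠ 0 ∧ (f j).d = 0
    · have hs : (f j).sign = false := by
        rcases Bool.eq_false_or_eq_true (f j).sign with h | h
        · exact absurd (hA j h hj.1) (by simpa using hj.2)
        · exact h
      rw [Lit.set, hs, if_neg (by simp)]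
      intro hmem
      obtain ⟨w, hw⟩ := (mem_posSet_snoc _ _ _).mp hmem
      rw [hj.2, zero_smul, add_zero] at hw
      apply hz' j hj
      simp only [Lit.e, Lit.drop] at hw ⊢
      linear_combination (norm := module) hw
    · exact (key j ρ z' xs hj).mpr (by have := hρ j; rwa [if_neg hj] at this)


/-- Normal form: finite union of finite intersections of literals. -/
def NF {n k : ℕ} (D : Set (Fin k → Fin n → ℤ)) : Prop :=
  ∃ (ι : Type) (_ : Fintype ι) (κ : ι → Type) (_ : ∀ i, Fintype (κ i))
    (f : ∀ i, κ i → Lit n k), D = ⋃ i, ⋂ j, (f i j).set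

lemma NF_congr {D E : Set (Fin k → Fin n → ℤ)} (h : NF D) (he : D = E) : NF E := he ▸ h

lemma NF_lit (l : Lit n k) : NF l.set :=
  ⟨Unit, inferInstance, fun _ => Unit, fun _ => inferInstance, fun _ _ => l,
    by rw [Set.iUnion_const, Set.iInter_const]⟩

lemma NF_empty : NF (∅ : Set (Fin k → Fin n → ℤ)) :=
  ⟨Empty, inferInstance, fun _ => Unit, fun _ => inferInstance, fun i _ => i.elim, by simp⟩

lemma NF_iUnion {ι₀ : Type} [Fintype ι₀] {S : ι₀ → Set (Fin k → Fin n → ℤ)}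
    (h : ∀ i, NF (S i)) : NF (⋃ i, S i) := by
  choose ι hι κ hκ f hf using h
  refine ⟨Σ i, ι i, inferInstance, fun p => κ p.1 p.2, fun p => hκ p.1 p.2,
    fun p => f p.1 p.2, ?_⟩
  simp_rw [hf]
  rw [Set.iUnion_sigma]

lemma NF_union {D E : Set (Fin k → Fin n → ℤ)} (hD : NF D) (hE : NF E) :
    NF (D ∪ E) := by
  have := NF_iUnion (S := fun b : Bool => if b then D else E)
    (fun b => by cases b <;> simpa)
  refine NF_congr this ?_
  ext x
  simp only [Set.mem_iUnion, Set.mem_union]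
  constructor
  · rintro ⟨b, hb⟩; cases b <;> simp_all
  · rintro (h | h); exacts [⟨true, by simpa⟩, ⟨false, by simpa⟩]

lemma NF_inter {D E : Set (Fin k → Fin n → ℤ)} (hD : NF D) (hE : NF E) :
    NF (D ∩ E) := by
  obtain ⟨ι₁, hι₁, κ₁, hκ₁, f₁, rfl⟩ := hD
  obtain ⟨ι₂, hι₂, κ₂, hκ₂, f₂, rfl⟩ := hE
  refine ⟨ι₁ × ι₂, inferInstance, fun p => κ₁ p.1 ⊕ κ₂ p.2,
    fun p => by haveI := hκ₁ p.1; haveI := hκ₂ p.2; infer_instance,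
    fun p => Sum.elim (f₁ p.1) (f₂ p.2), ?_⟩
  ext x
  simp only [Set.mem_inter_iff, Set.mem_iUnion, Set.mem_iInter]
  constructor
  · rintro ⟨⟨i₁, h₁⟩, ⟨i₂, h₂⟩⟩
    refine ⟨⟨i₁, i₂⟩, fun j => ?_⟩
    cases j with
    | inl j => exact h₁ j
    | inr j => exact h₂ j
  · rintro ⟨⟨i₁, i₂⟩, h⟩
    exact ⟨⟨i₁, fun j => h (Sum.inl j)⟩, ⟨i₂, fun j => h (Sum.inr j)⟩⟩

lemma Lit.set_neg (l : Lit n k) : (⟨!l.sign, l.a, l.c, l.d⟩ : Lit n k).set = l.setᶜ := by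
  cases hs : l.sign <;> simp [Lit.set, hs, Lit.posSet]

lemma NF_compl {D : Set (Fin k → Fin n → ℤ)} (hD : NF D) : NF Dᶜ := by
  obtain ⟨ι, hι, κ, hκ, f, rfl⟩ := hD
  classical
  haveI := hι
  haveI := fun i => hκ i
  refine ⟨∀ i, κ i, inferInstance, fun _ => ι, fun _ => hι,
    fun g i => ⟨!(f i (g i)).sign, (f i (g i)).a, (f i (g i)).c, (f i (g i)).d⟩, ?_⟩
  ext x
  simp only [Set.mem_compl_iff, Set.mem_iUnion, Set.mem_iInter, not_exists, not_forall]
  constructor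
  · intro h
    choose g hg using h
    exact ⟨g, fun i => by rw [Lit.set_neg]; exact hg i⟩
  · rintro ⟨g, hg⟩ i
    exact ⟨g i, by have := hg i; rwa [Lit.set_neg] at this⟩

lemma NF_proj (hn : 0 < n) {D : Set (Fin (k+1) → Fin n → ℤ)} (hD : NF D) :
    NF {xs | ∃ z, Fin.snoc xs z ∈ D} := by
  classical
  obtain ⟨ι, hι, κ, hκ, f, rfl⟩ := hD
  haveI := hι
  haveI := fun i => hκ i
  have hsplit : {xs | ∃ z, Fin.snoc xs z ∈ ⋃ i, ⋂ j, (f i j).set}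
      = ⋃ i, {xs | ∃ z, ∀ j, Fin.snoc xs z ∈ (f i j).set} := by
    ext xs
    simp only [Set.mem_setOf_eq, Set.mem_iUnion, Set.mem_iInter]
    tauto
  refine NF_congr (NF_iUnion fun i => ?_) hsplit.symm
  by_cases hAc : ∃ j, (f i j).sign = true ∧ (f i j).e ≠ 0 ∧ (f i j).d = 0
  · obtain ⟨j', h1, h2, h3⟩ := hAc
    refine NF_congr ?_ (proj_cell_A (f i) j' h1 h3 h2).symm
    exact ⟨Unit, inferInstance, fun _ => Option (κ i), fun _ => inferInstance,
      fun _ o => (o.elim (⟨true, (f i j').drop, (f i j').c, -(f i j').e⟩ : Lit n k)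
        (fun j => (f i j).subst (f i j').e (f i j').drop (f i j').c)),
      (Set.iUnion_const _).symm⟩
  · push_neg at hAc
    obtain ⟨N, hN, g, hg⟩ := proj_cell_B hn (f i) hAc
    exact ⟨Fin n → Fin N, inferInstance, fun _ => κ i, fun _ => hκ i, g, hg⟩

lemma NF_forall (hn : 0 < n) {D : Set (Fin (k+1) → Fin n → ℤ)} (hD : NF D) :
    NF {xs | ∀ z, Fin.snoc xs z ∈ D} := by
  refine NF_congr (NF_compl (NF_proj hn (NF_compl hD))) ?_
  ext xs
  simp only [Set.mem_compl_iff, Set.mem_setOf_eq, not_exists, not_not]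

lemma lsum_add (a b : Fin k → ℤ) (xs : Fin k → Fin n → ℤ) :
    lsum (fun i => a i + b i) xs = lsum a xs + lsum b xs := by
  unfold lsum
  rw [← Finset.sum_add_distrib]
  congr 1; funext i; rw [add_smul]

lemma lsum_sub' (a b : Fin k → ℤ) (xs : Fin k → Fin n → ℤ) :
    lsum (fun i => a i - b i) xs = lsum a xs - lsum b xs := by
  unfold lsum
  rw [← Finset.sum_sub_distrib]
  congr 1; funext i; rw [sub_smul]

lemma term_linear (A : Set (Fin n → ℤ)) (t : grpLang.Term (↥A ⊕ Fin k)) :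
    ∃ (a : Fin k → ℤ) (c : Fin n → ℤ), ∀ xs : Fin k → Fin n → ℤ,
      t.realize (Sum.elim (Subtype.val : ↥A → (Fin n → ℤ)) xs) = c + lsum a xs := by
  induction t with
  | var v =>
    cases v with
    | inl p =>
      refine ⟨0, (p : Fin n → ℤ), fun xs => ?_⟩
      show (p : Fin n → ℤ) = _
      simp [lsum]
    | inr i =>
      refine ⟨fun j => if j = i then 1 else 0, 0, fun xs => ?_⟩
      show xs i = _
      simp [lsum, ite_smul, Finset.sum_ite_eq']
  | @func l f ts ih =>
    match l, f with
    | 0, f =>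
      refine ⟨0, 0, fun xs => ?_⟩
      show (0 : Fin n → ℤ) = _
      simp [lsum]
    | 1, f => exact f.elim
    | 2, f =>
      obtain ⟨a₀, c₀, h₀⟩ := ih 0
      obtain ⟨a₁, c₁, h₁⟩ := ih 1
      refine ⟨fun i => a₀ i + a₁ i, c₀ + c₁, fun xs => ?_⟩
      show ((ts 0).realize (Sum.elim (Subtype.val : ↥A → (Fin n → ℤ)) xs)
          + (ts 1).realize (Sum.elim (Subtype.val : ↥A → (Fin n → ℤ)) xs) : Fin n → ℤ) = _
      rw [h₀ xs, h₁ xs, lsum_add]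
      abel
    | (l + 3), f => exact f.elim


lemma pull_posSet {n : ℕ} (l : Lit n 1) (g : Fin n → ℤ) :
    ((fun _ : Fin 1 => g) ∈ l.posSet) ↔ ∃ w, l.a 0 • g = l.c + l.d • w := by
  unfold Lit.posSet
  rw [Set.mem_setOf_eq]
  have h : lsum l.a (fun _ : Fin 1 => g) = l.a 0 • g := by
    unfold lsum
    rw [Fin.sum_univ_one]
  rw [h]

lemma formula_NF {n : ℕ} (hn : 0 < n) (A : Set (Fin n → ℤ)) {k : ℕ}
    (φ : grpLang.BoundedFormula (↥A) k) :
    NF {xs : Fin k → Fin n → ℤ | φ.Realize (Subtype.val : ↥A → (Fin n → ℤ)) xs} := by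
  induction φ with
  | falsum =>
    refine NF_congr NF_empty ?_
    ext xs
    simp [Language.BoundedFormula.Realize]
  | equal t₁ t₂ =>
    obtain ⟨a₁, c₁, h₁⟩ := term_linear A t₁
    obtain ⟨a₂, c₂, h₂⟩ := term_linear A t₂
    refine NF_congr (NF_lit ⟨true, fun i => a₁ i - a₂ i, c₂ - c₁, 0⟩) ?_
    ext xs
    rw [Lit.set, if_pos rfl]
    show (fun v => ∃ w, lsum (fun i => a₁ i - a₂ i) v = (c₂ - c₁) + (0:ℤ) • w) xs ↔ _
    show (∃ w, lsum (fun i => a₁ i - a₂ i) xs = (c₂ - c₁) + (0:ℤ) • w) ↔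
      (t₁.realize (Sum.elim (Subtype.val : ↥A → (Fin n → ℤ)) xs)
        = t₂.realize (Sum.elim (Subtype.val : ↥A → (Fin n → ℤ)) xs))
    rw [h₁ xs, h₂ xs, lsum_sub']
    constructor
    · rintro ⟨w, hw⟩
      linear_combination (norm := module) hw
    · intro h
      exact ⟨0, by linear_combination (norm := module) h⟩
  | rel r ts => exact (r : Empty).elim
  | imp φ ψ ihφ ihψ =>
    refine NF_congr (NF_union (NF_compl ihφ) ihψ) ?_
    ext xs
    simp only [Set.mem_union, Set.mem_compl_iff, Set.mem_setOf_eq]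
    show _ ↔ (φ.Realize _ xs → ψ.Realize _ xs)
    tauto
  | all φ ih =>
    refine NF_congr (NF_forall hn ih) ?_
    rfl

/-- Eventual periodicity invariant. -/
def EvPer (S : Set (Fin n → ℤ)) : Prop :=
  ∃ m : ℤ, m ≠ 0 ∧ ∃ S' : Set (Fin n → ℤ),
    (∀ x ∈ S', ∀ w, x + m • w ∈ S') ∧ ((S \ S') ∪ (S' \ S)).Finite

lemma EvPer_congr {S T : Set (Fin n → ℤ)} (h : EvPer S) (he : S = T) : EvPer T := he ▸ h

lemma EvPer_compl {S : Set (Fin n → ℤ)} (h : EvPer S) : EvPer Sᶜ := by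
  obtain ⟨m, hm, S', hinv, hfin⟩ := h
  refine ⟨m, hm, S'ᶜ, fun x hx w hmem => ?_, ?_⟩
  · exact hx (by simpa using hinv _ hmem (-w))
  · refine hfin.subset ?_
    intro x hx
    rcases hx with ⟨h1, h2⟩ | ⟨h1, h2⟩
    · exact Or.inr ⟨by simpa using h2, h1⟩
    · exact Or.inl ⟨by simpa using h2, h1⟩

lemma EvPer_iInter {κ : Type} [Fintype κ] (S : κ → Set (Fin n → ℤ))
    (h : ∀ j, EvPer (S j)) : EvPer (⋂ j, S j) := by
  classical
  choose m hm S' hinv hfin using h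
  refine ⟨∏ j, m j, Finset.prod_ne_zero_iff.mpr (fun j _ => hm j), ⋂ j, S' j,
    fun x hx w => ?_, ?_⟩
  · rw [Set.mem_iInter] at hx ⊢
    intro j
    have hsplit : (∏ i, m i) = m j * ∏ i ∈ Finset.univ.erase j, m i :=
      (Finset.mul_prod_erase _ _ (Finset.mem_univ j)).symm
    rw [hsplit, mul_smul]
    exact hinv j x (hx j) _
  · refine (Set.Finite.subset (Set.finite_iUnion hfin) ?_)
    intro x hx
    rcases hx with ⟨h1, h2⟩ | ⟨h1, h2⟩
    · rw [Set.mem_iInter] at h1 h2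
      push_neg at h2
      obtain ⟨j, hj⟩ := h2
      exact Set.mem_iUnion.mpr ⟨j, Or.inl ⟨h1 j, hj⟩⟩
    · rw [Set.mem_iInter] at h1 h2
      push_neg at h2
      obtain ⟨j, hj⟩ := h2
      exact Set.mem_iUnion.mpr ⟨j, Or.inr ⟨h1 j, hj⟩⟩

lemma EvPer_basic (a d : ℤ) (c : Fin n → ℤ) :
    EvPer {g : Fin n → ℤ | ∃ w, a • g = c + d • w} := by
  by_cases hd : d = 0
  · subst hd
    by_cases ha : a = 0
    · subst ha
      refine ⟨1, one_ne_zero, {g : Fin n → ℤ | ∃ w, (0:ℤ) • g = c + (0:ℤ) • w},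
        fun x hx w => ?_, by simp⟩
      obtain ⟨w', hw'⟩ := hx
      refine ⟨w', ?_⟩
      simpa using hw'
    · refine ⟨1, one_ne_zero, ∅, by simp, ?_⟩
      rw [Set.diff_empty, Set.empty_diff, Set.union_empty]
      refine Set.Subsingleton.finite ?_
      rintro x ⟨w, hw⟩ y ⟨w', hw'⟩
      rw [zero_smul, add_zero] at hw hw'
      exact smul_right_injective _ ha (hw.trans hw'.symm)
  · refine ⟨d, hd, {g : Fin n → ℤ | ∃ w, a • g = c + d • w}, fun x hx w => ?_, by simp⟩
    obtain ⟨w', hw'⟩ := hx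
    exact ⟨w' + a • w, by linear_combination (norm := module) hw'⟩

lemma endgame (hn : 0 < n) (G : AddSubgroup (Fin n → ℤ)) (hG : G ≠ ⊥) (hind : G.index = 0)
    (hP : EvPer (G : Set (Fin n → ℤ))) : False := by
  classical
  haveI : Infinite (Fin n → ℤ) :=
    Infinite.of_injective (fun t _ => t) (fun s t e => congrFun e ⟨0, hn⟩)
  obtain ⟨m, hm, S', hinv, hfin⟩ := hP
  obtain ⟨g₀, hg₀G, hg₀⟩ : ∃ g ∈ G, g ≠ (0 : Fin n → ℤ) := by
    by_contra h
    push_neg at h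
    exact hG ((AddSubgroup.eq_bot_iff_forall G).mpr h)
  have hGinf : (G : Set (Fin n → ℤ)).Infinite :=
    Set.infinite_of_injective_forall_mem (f := fun t : ℤ => t • g₀)
      (smul_left_injective ℤ hg₀) (fun t => G.zsmul_mem hg₀G t)
  have hne : ((G : Set (Fin n → ℤ)) ∩ S').Nonempty := by
    by_contra h
    rw [Set.not_nonempty_iff_eq_empty] at h
    refine hGinf (hfin.subset ?_)
    intro x hx
    exact Or.inl ⟨hx, fun hxS' => Set.eq_empty_iff_forall_notMem.mp h x ⟨hx, hxS'⟩⟩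
  obtain ⟨x, hxG, hxS'⟩ := hne
  have hbadfin : Set.Finite {w : Fin n → ℤ | x + m • w ∉ G} := by
    have hsub : {w : Fin n → ℤ | x + m • w ∉ G} ⊆
        (fun w : Fin n → ℤ => x + m • w) ⁻¹' (S' \ G) := by
      intro w hw
      exact ⟨hinv x hxS' w, hw⟩
    refine (Set.Finite.preimage ?_ (hfin.subset (fun y hy => Or.inr hy))).subset hsub
    intro w₁ _ w₂ _ h
    have : m • w₁ = m • w₂ := by
      have := h
      simpa using this
    exact smul_right_injective _ hm this
  have hmu : ∀ u : Fin n → ℤ, m • u ∈ G := by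
    intro u
    have hfin2 : Set.Finite {w : Fin n → ℤ | x + m • (w + u) ∉ G} := by
      have : {w : Fin n → ℤ | x + m • (w + u) ∉ G}
          = (fun w : Fin n → ℤ => w + u) ⁻¹' {w : Fin n → ℤ | x + m • w ∉ G} := rfl
      rw [this]
      exact Set.Finite.preimage (Set.injOn_of_injective (add_left_injective u))
        hbadfin
    obtain ⟨w, hw⟩ := (hbadfin.union hfin2).infinite_compl.nonempty
    simp only [Set.mem_compl_iff, Set.mem_union, Set.mem_setOf_eq, not_or, not_not] at hw
    have ha : x + m • w ∈ G := hw.1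
    have hb : x + m • (w + u) ∈ G := hw.2
    have : (x + m • (w + u)) - (x + m • w) = m • u := by
      rw [smul_add]
      abel
    exact this ▸ sub_mem hb ha
  haveI : NeZero m.natAbs := ⟨Int.natAbs_ne_zero.mpr hm⟩
  let f : (Fin n → ℤ) →+ (Fin n → ZMod m.natAbs) :=
    AddMonoidHom.mk' (fun v i => ((v i : ℤ) : ZMod m.natAbs))
      (fun v w => by funext i; simp [Pi.add_apply])
  have hker : f.ker ≤ G := by
    intro v hv
    have hdvd : ∀ i, m ∣ v i := by
      intro i
      have : ((v i : ℤ) : ZMod m.natAbs) = 0 := congrFun hv i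
      exact Int.natAbs_dvd.mp ((ZMod.intCast_zmod_eq_zero_iff_dvd _ _).mp this)
    have : m • (fun i => v i / m) = v := by
      funext i
      simp only [Pi.smul_apply, smul_eq_mul]
      exact Int.mul_ediv_cancel' (hdvd i)
    exact this ▸ hmu _
  haveI : Finite ((Fin n → ℤ) ⧸ f.ker) :=
    Finite.of_equiv _ (QuotientAddGroup.quotientKerEquivRange f).symm.toEquiv
  have h1 : f.ker.index ≠ 0 := AddSubgroup.index_ne_zero_of_finite
  have h2 : G.index ∣ f.ker.index := AddSubgroup.index_dvd_of_le hker
  rw [hind] at h2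
  exact h1 (zero_dvd_iff.mp h2)


/-- For `n ≥ 2`, every nontrivial subgroup of `ℤ^n` of infinite index (recall that
`AddSubgroup.index G = 0` encodes that `G` has infinite index) is not definable,
even with parameters (i.e. over the full parameter set `ℤ^n`), in the structure
`(ℤ^n, +, 0)`. -/
theorem not_definable_of_infinite_index (n : ℕ) (hn : 2 ≤ n)
    (G : AddSubgroup (Fin n → ℤ)) (hG : G ≠ ⊥) (hind : G.index = 0) :
    ¬ Set.Definable₁ (Set.univ : Set (Fin n → ℤ)) grpLang (G : Set (Fin n → ℤ)) := by
  intro hdef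
  have hn1 : 0 < n := by omega
  obtain ⟨φ, hφ⟩ := Set.definable_iff_exists_formula_sum.mp hdef
  set ψ : grpLang.BoundedFormula (↥(Set.univ : Set (Fin n → ℤ))) 1 :=
    (Language.BoundedFormula.relabel id φ : grpLang.BoundedFormula _ (1 + 0)) with hψ
  have hD : {xs : Fin 1 → (Fin n → ℤ) |
        ψ.Realize (Subtype.val : ↥(Set.univ : Set (Fin n → ℤ)) → (Fin n → ℤ)) xs}
      = {x : Fin 1 → (Fin n → ℤ) | x 0 ∈ G} := by
    ext xs
    rw [Set.mem_setOf_eq, Set.mem_setOf_eq, hψ]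
    rw [Language.BoundedFormula.realize_relabel, Function.comp_id]
    have h3 := Set.ext_iff.mp hφ (xs ∘ Fin.castAdd 0)
    simp only [Set.mem_setOf_eq] at h3
    rw [Language.Formula.Realize] at h3
    have hx0 : (xs ∘ Fin.castAdd 0) 0 = xs 0 := by
      show xs (Fin.castAdd 0 0) = xs 0
      congr 1
    have h6 : (xs ∘ Fin.castAdd 0) 0 ∈ (G : Set (Fin n → ℤ)) ↔ xs 0 ∈ G := by
      rw [hx0]
      exact SetLike.mem_coe
    exact (iff_of_eq (congrArg (Language.BoundedFormula.Realize φ _)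
      (Subsingleton.elim _ _))).trans (h3.symm.trans h6)
  have hNF : NF {x : Fin 1 → (Fin n → ℤ) | x 0 ∈ G} :=
    NF_congr (formula_NF hn1 (Set.univ : Set (Fin n → ℤ)) ψ) hD
  have hEv : EvPer (G : Set (Fin n → ℤ)) := by
    obtain ⟨ι, hι, κ, hκ, f, hf⟩ := hNF
    haveI := hι
    haveI := fun i => hκ i
    have hT : ∀ (l : Lit n 1), EvPer {g : Fin n → ℤ | (fun _ : Fin 1 => g) ∈ l.set} := by
      intro l
      by_cases hs : l.sign = true
      · refine EvPer_congr (EvPer_basic (l.a 0) l.d l.c) ?_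
        ext g
        rw [Set.mem_setOf_eq, Set.mem_setOf_eq, Lit.set, hs, if_pos rfl]
        exact (pull_posSet l g).symm
      · have hs' : l.sign = false := by
          rcases Bool.eq_false_or_eq_true l.sign with h | h
          · exact absurd h hs
          · exact h
        refine EvPer_congr (EvPer_compl (EvPer_basic (l.a 0) l.d l.c)) ?_
        ext g
        rw [Set.mem_compl_iff, Set.mem_setOf_eq, Set.mem_setOf_eq, Lit.set, hs',
          if_neg (by simp), Set.mem_compl_iff]
        exact not_congr (pull_posSet l g).symm
    have hGeq : (G : Set (Fin n → ℤ))
        = ⋃ i, ⋂ j, {g : Fin n → ℤ | (fun _ : Fin 1 => g) ∈ (f i j).set} := by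
      ext g
      have h1 : g ∈ (G : Set (Fin n → ℤ))
          ↔ ((fun _ : Fin 1 => g) ∈ {x : Fin 1 → (Fin n → ℤ) | x 0 ∈ G}) := Iff.rfl
      rw [h1, hf]
      simp only [Set.mem_iUnion, Set.mem_iInter, Set.mem_setOf_eq]
    rw [hGeq]
    have hco : (⋃ i, ⋂ j, {g : Fin n → ℤ | (fun _ : Fin 1 => g) ∈ (f i j).set})
        = (⋂ i, (⋂ j, {g : Fin n → ℤ | (fun _ : Fin 1 => g) ∈ (f i j).set})ᶜ)ᶜ := by
      ext g
      simp
    rw [hco]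
    exact EvPer_compl (EvPer_iInter _ (fun i =>
      EvPer_compl (EvPer_iInter _ (fun j => hT (f i j)))))
  exact endgame hn1 G hG hind hEv
end QE
end

section
/- Let A ⊆ ℕ be an infinite set whose increasing enumeration a₀ < a₁ < a₂ < … has eventually strictly increasing gaps, i.e., there is k₀ such that a_{i+2} − a_{i+1} > a_{i+1} − a_i for all i > k₀. Then for every natural number n ≥ 1, every integer m, and every finite family of pairs of integers (k₁,l₁),…,(k_p,l_p), the coset m + nℤ is not contained in the union ⋃_{i=1}^{p} {k_i + l_i·a : a ∈ A}; that is, there exists an integer x with x ≡ m (mod n) and x ∉ ⋃_{i=1}^{p} {k_i + l_i·a : a ∈ A}. -/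
/-- Let `A ⊆ ℕ` be an infinite set whose increasing enumeration `a₀ < a₁ < …` has
eventually strictly increasing gaps: there is `k₀` with
`a (i+2) - a (i+1) > a (i+1) - a i` for all `i > k₀`. Then for every `n ≥ 1`, every
integer `m`, and every finite family of pairs of integers `(kᵢ, lᵢ)`, the coset
`m + nℤ` is not contained in `⋃ᵢ {kᵢ + lᵢ·a : a ∈ A}`: there is an integer `x` with
`x ≡ m (mod n)` avoiding all the sets `{kᵢ + lᵢ·a : a ∈ A}`. -/
theorem coset_not_covered_of_sparse (A : Set ℕ) (a : ℕ → ℕ)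
    (ha_mono : StrictMono a) (ha_range : Set.range a = A)
    (hgaps : ∃ k₀ : ℕ, ∀ i : ℕ, k₀ < i → a (i + 1) - a i < a (i + 2) - a (i + 1)) :
    ∀ (n : ℕ), 1 ≤ n → ∀ (m : ℤ) (p : ℕ) (k l : Fin p → ℤ),
      ∃ x : ℤ, x ≡ m [ZMOD (n : ℤ)] ∧
        ∀ i : Fin p, ∀ α ∈ A, x ≠ k i + l i * (α : ℤ) := by
  obtain ⟨k₀, hk₀⟩ := hgaps
  set c := k₀ + 1 with hc
  -- eventual gap lower bound
  have hgap : ∀ s : ℕ, s + 1 ≤ a (c + s + 1) - a (c + s) := by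
    intro s
    induction s with
    | zero =>
      have h := ha_mono (show c < c + 1 by omega)
      simp only [Nat.add_zero]
      omega
    | succ s ih =>
      have h1 := hk₀ (c + s) (by omega)
      have h2 : a (c + s) < a (c + s + 1) := ha_mono (by omega)
      have h2' : a (c + s + 1) < a (c + s + 2) := ha_mono (by omega)
      show s + 1 + 1 ≤ a (c + s + 2) - a (c + s + 1)
      omega
  -- quadratic growth
  have hquad : ∀ s : ℕ, s * (s + 1) ≤ 2 * a (c + s) := by
    intro s
    induction s with
    | zero => simp
    | succ s ih =>
      have h1 := hgap s
      have h2 : a (c + s) < a (c + s + 1) := ha_mono (by omega)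
      have h3 : c + (s + 1) = c + s + 1 := by ring
      have h1' : a (c + s) + (s + 1) ≤ a (c + s + 1) := by omega
      show (s + 1) * (s + 1 + 1) ≤ 2 * a (c + s + 1)
      nlinarith
  intro n hn m p k l
  by_contra hcon
  push_neg at hcon
  have hmem : ∀ j : ℕ, (m + (n : ℤ) * j) ≡ m [ZMOD (n : ℤ)] := by
    intro j
    show Int.ModEq _ _ _
    simp [Int.ModEq, Int.add_mul_emod_self_left]
  choose i α hA hx using fun j : ℕ => hcon (m + (n : ℤ) * j) (hmem j)
  have hrng : ∀ j : ℕ, ∃ t, a t = α j := by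
    intro j
    have : α j ∈ Set.range a := by rw [ha_range]; exact hA j
    exact this
  choose t ht using hrng
  set K : ℕ := Finset.univ.sup fun i : Fin p => (k i).natAbs with hK
  set M : ℕ := m.natAbs + K with hM
  set R : ℕ := p * (c + 1) + 2 * p * (M + n) + 1 with hR
  set N : ℕ := R * R with hN
  set B : ℕ := M + n * N with hB
  set T : ℕ := c + Nat.sqrt (2 * B) with hT
  -- bound on α j for j < N when l (i j) ≠ 0
  have hαB : ∀ j : ℕ, j < N → l (i j) ≠ 0 → α j ≤ B := by
    intro j hj hl0
    have hKi : (k (i j)).natAbs ≤ K :=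
      Finset.le_sup (f := fun i : Fin p => (k i).natAbs) (Finset.mem_univ (i j))
    have h1 : (l (i j)) * (α j : ℤ) = (m + (n : ℤ) * j) - k (i j) := by
      have := hx j; linarith
    have h2 : (α j : ℤ) ≤ |l (i j)| * (α j : ℤ) := by
      have : (1 : ℤ) ≤ |l (i j)| := by
        rcases lt_or_ge (l (i j)) 0 with h | h
        · rw [abs_of_neg h]; omega
        · rw [abs_of_nonneg h]; omega
      nlinarith [Int.ofNat_nonneg (α j)]
    have h3 : |l (i j)| * (α j : ℤ) = |(m + (n : ℤ) * j) - k (i j)| := by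
      rw [← h1, abs_mul]
      congr 1
      exact (abs_of_nonneg (Int.ofNat_nonneg _)).symm
    have h4 : |(m + (n : ℤ) * j) - k (i j)| ≤ (m.natAbs : ℤ) + (n : ℤ) * N + (K : ℤ) := by
      have hj' : (j : ℤ) ≤ (N : ℤ) := by exact_mod_cast hj.le
      have habs : |(m + (n : ℤ) * j) - k (i j)| ≤ |m| + (n:ℤ) * j + |k (i j)| := by
        calc |(m + (n : ℤ) * j) - k (i j)| ≤ |m + (n:ℤ)*j| + |k (i j)| := abs_sub _ _
          _ ≤ |m| + |(n:ℤ)*j| + |k (i j)| := by gcongr; exact abs_add_le _ _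
          _ = |m| + (n:ℤ)*j + |k (i j)| := by
              congr 2
              rw [abs_of_nonneg (by positivity)]
      have hKi' : |k (i j)| ≤ (K : ℤ) := by
        rw [Int.abs_eq_natAbs]; exact_mod_cast hKi
      have : (n:ℤ) * j ≤ (n:ℤ) * N := by
        have : (0:ℤ) ≤ n := by positivity
        nlinarith
      rw [Int.abs_eq_natAbs m] at habs
      linarith
    have hBcast : (B : ℤ) = (m.natAbs : ℤ) + (K : ℤ) + (n : ℤ) * (N : ℤ) := by
      rw [hB, hM]; push_cast; ring
    have : (α j : ℤ) ≤ (B : ℤ) := by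
      rw [hBcast]
      calc (α j : ℤ) ≤ |l (i j)| * (α j : ℤ) := h2
        _ = |(m + (n : ℤ) * j) - k (i j)| := h3
        _ ≤ (m.natAbs : ℤ) + (n : ℤ) * N + (K : ℤ) := h4
        _ = (m.natAbs : ℤ) + (K : ℤ) + (n : ℤ) * N := by ring
    exact_mod_cast this
  -- bound on t j
  have htT : ∀ j : ℕ, j < N → l (i j) ≠ 0 → t j ≤ T := by
    intro j hj hl0
    rcases le_or_gt (t j) c with h | h
    · omega
    · obtain ⟨s, hs⟩ : ∃ s, t j = c + s := ⟨t j - c, by omega⟩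
      have h1 : s * (s + 1) ≤ 2 * α j := by rw [← ht j, hs]; exact hquad s
      have h2 : α j ≤ B := hαB j hj hl0
      have h3 : s * s ≤ 2 * B := by nlinarith
      have h4 : s ≤ Nat.sqrt (2 * B) := Nat.le_sqrt.mpr h3
      omega
  -- the injection
  set F : ℕ → Fin p × ℕ := fun j => (i j, if l (i j) = 0 then 0 else t j) with hF
  have hmaps : ∀ j ∈ Finset.range N, F j ∈ Finset.univ ×ˢ Finset.range (T + 1) := by
    intro j hj
    rw [Finset.mem_range] at hj
    rw [Finset.mem_product]
    refine ⟨Finset.mem_univ _, ?_⟩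
    rw [Finset.mem_range]
    by_cases hl0 : l (i j) = 0
    · simp [hF, hl0]
    · simp only [hF, if_neg hl0]
      have := htT j hj hl0; omega
  have hinj : Set.InjOn F (Finset.range N) := by
    intro j hj j' hj' hFeq
    have hii : i j = i j' := congrArg Prod.fst hFeq
    have hsnd := congrArg Prod.snd hFeq
    simp only [hF] at hsnd
    have hxeq : m + (n : ℤ) * j = m + (n : ℤ) * j' := by
      by_cases hl0 : l (i j) = 0
      · have hl0' : l (i j') = 0 := hii ▸ hl0
        rw [hx j, hx j', hii, hl0']
        ring
      · have hl0' : l (i j') ≠ 0 := hii ▸ hl0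
        rw [if_neg hl0, if_neg hl0'] at hsnd
        have hαeq : α j = α j' := by rw [← ht j, ← ht j', hsnd]
        rw [hx j, hx j', hii, hαeq]
    have : (j : ℤ) = (j' : ℤ) := by
      have hn' : (0:ℤ) < n := by exact_mod_cast hn
      have : (n:ℤ) * j = (n:ℤ) * j' := by linarith
      exact mul_left_cancel₀ (by positivity) this
    exact_mod_cast this
  have hcard : N ≤ p * (T + 1) := by
    calc N = (Finset.range N).card := (Finset.card_range N).symm
      _ ≤ (Finset.univ ×ˢ Finset.range (T + 1)).card :=
          Finset.card_le_card_of_injOn F hmaps hinj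
      _ = p * (T + 1) := by
          rw [Finset.card_product, Finset.card_univ, Fintype.card_fin, Finset.card_range]
  -- final numeric contradiction
  have hsqrt : Nat.sqrt (2 * B) ≤ 2 * (M + n) * R := by
    have hR1 : 1 ≤ R := by omega
    have hRR : 1 ≤ R * R := Nat.one_le_iff_ne_zero.mpr (by positivity)
    have hn1 : 1 ≤ M + n := by omega
    have h2 : 2 * B ≤ (2 * (M + n) * R) ^ 2 := by
      have e1 : (M + n) * 1 ≤ (M + n) * (M + n) := Nat.mul_le_mul_left _ hn1
      have e2 : M * 1 ≤ M * (R * R) := Nat.mul_le_mul_left _ hRR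
      rw [hB, hN, pow_two]
      nlinarith
    calc Nat.sqrt (2 * B) ≤ Nat.sqrt ((2 * (M + n) * R) ^ 2) := Nat.sqrt_le_sqrt h2
      _ = 2 * (M + n) * R := Nat.sqrt_eq' _
  have hfin : p * (T + 1) < N := by
    have h1 : p * (T + 1) ≤ p * (c + 2 * (M + n) * R + 1) := by
      apply Nat.mul_le_mul_left
      rw [hT]; omega
    have h2 : p * (c + 2 * (M + n) * R + 1) < R * R := by
      have hR1 : 1 ≤ R := by omega
      have e3 : p * (c + 1) * 1 ≤ p * (c + 1) * R := Nat.mul_le_mul_left _ hR1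
      have e4 : R * R = p * (c + 1) * R + 2 * p * (M + n) * R + R := by
        rw [hR]; ring
      have e5 : p * (c + 2 * (M + n) * R + 1) = p * (c + 1) + 2 * p * (M + n) * R := by
        ring
      omega
    omega
  omega
end

section
/- Let q ≥ 2 be a natural number and let Π_q := {q^m : m ∈ ℕ, m ≥ 1}. Then for every natural number n ≥ 1, every integer m, and every finite family of pairs of integers (k₁,l₁),…,(k_p,l_p), the coset m + nℤ is not contained in the union ⋃_{i=1}^{p} {k_i + l_i·α : α ∈ Π_q}; that is, there exists an integer x with x ≡ m (mod n) and x ∉ ⋃_{i=1}^{p} {k_i + l_i·α : α ∈ Π_q}. -/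
/-- Let `q ≥ 2` and `Π_q = {q^m : m ≥ 1}`. For every `n ≥ 1`, every integer `m`, and
every finite family of pairs of integers `(kᵢ, lᵢ)`, the coset `m + nℤ` is not contained
in `⋃ᵢ {kᵢ + lᵢ·α : α ∈ Π_q}`: there is an integer `x` with `x ≡ m (mod n)` avoiding
all the sets `{kᵢ + lᵢ·α : α ∈ Π_q}`. -/
theorem coset_not_covered_by_powers (q : ℕ) (hq : 2 ≤ q) :
    ∀ (n : ℕ), 1 ≤ n → ∀ (m : ℤ) (p : ℕ) (k l : Fin p → ℤ),
      ∃ x : ℤ, x ≡ m [ZMOD (n : ℤ)] ∧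
        ∀ i : Fin p, ∀ α ∈ {a : ℕ | ∃ m' : ℕ, 1 ≤ m' ∧ a = q ^ m'},
          x ≠ k i + l i * (α : ℤ) := by
  intro n hn m p k l
  set R : ℕ := p * n + 1 with hRdef
  set Q : ℕ := q ^ R with hQdef
  have hQ : p * n < Q := by
    calc p * n < 2 ^ (p * n + 1) := by
          have := Nat.lt_two_pow_self (n := p * n)
          calc p * n < 2 ^ (p * n) := this
            _ ≤ 2 ^ (p * n + 1) := Nat.pow_le_pow_right (by omega) (by omega)
      _ ≤ q ^ R := Nat.pow_le_pow_left hq _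
  have hQ1 : 1 ≤ Q := Nat.one_le_pow _ _ (by omega)
  haveI : NeZero Q := ⟨by omega⟩
  -- pigeonhole: find j ≤ p with m + n*j ≢ k i (mod Q) for all i
  have key : ∃ j : ℕ, j ≤ p ∧
      ∀ i : Fin p, ((m + n * j : ℤ) : ZMod Q) ≠ ((k i : ℤ) : ZMod Q) := by
    by_contra hcon
    push_neg at hcon
    obtain ⟨i0, _⟩ := hcon 0 (Nat.zero_le _)
    set g : ℕ → Fin p := fun j => if hj : j ≤ p then (hcon j hj).choose else i0 with hg
    have hmap : ∀ j ∈ Finset.range (p + 1), g j ∈ (Finset.univ : Finset (Fin p)) :=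
      fun _ _ => Finset.mem_univ _
    have hcard : (Finset.univ : Finset (Fin p)).card < (Finset.range (p + 1)).card := by
      simp
    obtain ⟨j₁, hj₁, j₂, hj₂, hne, heq⟩ :=
      Finset.exists_ne_map_eq_of_card_lt_of_maps_to hcard hmap
    rw [Finset.mem_range] at hj₁ hj₂
    have hj₁' : j₁ ≤ p := by omega
    have hj₂' : j₂ ≤ p := by omega
    have s₁ : ((m + n * j₁ : ℤ) : ZMod Q) = ((k (g j₁) : ℤ) : ZMod Q) := by
      rw [hg]; simp only [dif_pos hj₁']; exact (hcon j₁ hj₁').choose_spec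
    have s₂ : ((m + n * j₂ : ℤ) : ZMod Q) = ((k (g j₂) : ℤ) : ZMod Q) := by
      rw [hg]; simp only [dif_pos hj₂']; exact (hcon j₂ hj₂').choose_spec
    rw [heq, ← s₂] at s₁
    have hz : (((n : ℤ) * ((j₁ : ℤ) - (j₂ : ℤ)) : ℤ) : ZMod Q) = 0 := by
      push_cast at s₁ ⊢
      linear_combination s₁
    rw [ZMod.intCast_zmod_eq_zero_iff_dvd] at hz
    have habs : |(n : ℤ) * ((j₁ : ℤ) - (j₂ : ℤ))| < (Q : ℤ) := by
      rw [abs_mul]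
      have h1 : |(n : ℤ)| = (n : ℤ) := abs_of_nonneg (by positivity)
      have h2 : |(j₁ : ℤ) - (j₂ : ℤ)| ≤ (p : ℤ) := by
        rw [abs_sub_le_iff]; constructor <;> omega
      have : (n : ℤ) * |(j₁ : ℤ) - (j₂ : ℤ)| ≤ (n : ℤ) * p := by
        apply mul_le_mul_of_nonneg_left h2 (by positivity)
      have hQ' : (p : ℤ) * n < (Q : ℤ) := by exact_mod_cast hQ
      rw [h1]; nlinarith
    have := Int.eq_zero_of_abs_lt_dvd hz habs
    have hj : (j₁ : ℤ) = (j₂ : ℤ) := by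
      rcases mul_eq_zero.mp this with h | h
      · exfalso; omega
      · linarith
    exact hne (by exact_mod_cast hj)
  obtain ⟨j, hjp, hjk⟩ := key
  set C : ℤ := ∑ i : Fin p, (|k i| + |l i|) with hC
  have hC0 : 0 ≤ C := Finset.sum_nonneg fun i _ => by positivity
  have hCi : ∀ i, |k i| + |l i| ≤ C := fun i =>
    Finset.single_le_sum (f := fun i => |k i| + |l i|) (fun i _ => by positivity)
      (Finset.mem_univ i)
  set T : ℕ := 2 * C.toNat + m.natAbs + 2 with hT
  refine ⟨m + (n : ℤ) * (j + Q * T), ?_, ?_⟩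
  · have : (n : ℤ) ∣ m - (m + (n : ℤ) * (j + Q * T)) := ⟨-((j : ℤ) + Q * T), by ring⟩
    exact Int.modEq_iff_dvd.mpr this
  · rintro i α ⟨m', hm', rfl⟩ hx
    by_cases hcase : R ≤ m'
    · apply hjk i
      have h1 : ((m + (n : ℤ) * (j + Q * T) : ℤ) : ZMod Q) = ((m + n * j : ℤ) : ZMod Q) := by
        push_cast
        rw [ZMod.natCast_self]
        ring
      have hpow : (((q ^ m' : ℕ) : ℤ) : ZMod Q) = 0 := by
        push_cast
        have : ((q ^ m' : ℕ) : ZMod Q) = 0 := by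
          rw [ZMod.natCast_eq_zero_iff]
          exact pow_dvd_pow q hcase
        push_cast at this
        exact this
      have h2 : ((k i + l i * ((q ^ m' : ℕ) : ℤ) : ℤ) : ZMod Q) = ((k i : ℤ) : ZMod Q) := by
        push_cast [ZMod.natCast_eq_zero_iff] at hpow ⊢
        rw [hpow]
        ring
      rw [← h1, hx, h2]
    · -- m' < R : numeric contradiction
      push_neg at hcase
      have hqm : ((q ^ m' : ℕ) : ℤ) ≤ (Q : ℤ) := by
        exact_mod_cast Nat.pow_le_pow_right (by omega) (le_of_lt hcase)
      have hqm0 : (0 : ℤ) ≤ ((q ^ m' : ℕ) : ℤ) := by positivity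
      have hki : |k i| ≤ C := by have := hCi i; have := abs_nonneg (l i); linarith
      have hli : |l i| ≤ C := by have := hCi i; have := abs_nonneg (k i); linarith
      have hval : k i + l i * ((q ^ m' : ℕ) : ℤ) ≤ C + C * Q := by
        have h3 : l i * ((q ^ m' : ℕ) : ℤ) ≤ |l i| * Q := by
          calc l i * ((q ^ m' : ℕ) : ℤ) ≤ |l i * ((q ^ m' : ℕ) : ℤ)| := le_abs_self _
            _ = |l i| * ((q ^ m' : ℕ) : ℤ) := by rw [abs_mul, abs_of_nonneg hqm0]
            _ ≤ |l i| * Q := mul_le_mul_of_nonneg_left hqm (abs_nonneg _)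
        have h4 : k i ≤ C := le_trans (le_abs_self _) hki
        have h5 : |l i| * Q ≤ C * Q := mul_le_mul_of_nonneg_right hli (by positivity)
        linarith
      have hQ1' : (1 : ℤ) ≤ (Q : ℤ) := by exact_mod_cast hQ1
      have hxlarge : C + C * Q < m + (n : ℤ) * (j + Q * T) := by
        have hn' : (1 : ℤ) ≤ (n : ℤ) := by exact_mod_cast hn
        have hj0 : (0 : ℤ) ≤ (j : ℤ) := by positivity
        have hTval : (T : ℤ) = 2 * (C.toNat : ℤ) + (m.natAbs : ℤ) + 2 := by
          rw [hT]; push_cast; ring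
        have hCt : C ≤ (C.toNat : ℤ) := Int.self_le_toNat C
        have hCt0 : (0 : ℤ) ≤ (C.toNat : ℤ) := by positivity
        have hma : -m ≤ (m.natAbs : ℤ) := by
          rw [← Int.natAbs_neg]
          exact Int.le_natAbs
        have hma0 : (0 : ℤ) ≤ (m.natAbs : ℤ) := by positivity
        have hQT : (Q : ℤ) * T = 2 * (C.toNat : ℤ) * Q + (m.natAbs : ℤ) * Q + 2 * Q := by
          rw [hTval]; ring
        nlinarith [mul_le_mul_of_nonneg_right hCt (le_trans zero_le_one hQ1'),
          mul_le_mul_of_nonneg_left hQ1' hma0,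
          mul_le_mul_of_nonneg_right hn' (by positivity : (0:ℤ) ≤ (j:ℤ) + Q * T),
          mul_nonneg hCt0 (sub_nonneg.mpr hQ1')]
      linarith
end

section
/- Let Fac := {a! : a ∈ ℕ} be the set of factorials. Then for every natural number n ≥ 1, every integer m, and every finite family of pairs of integers (k₁,l₁),…,(k_p,l_p), the coset m + nℤ is not contained in the union ⋃_{i=1}^{p} {k_i + l_i·c : c ∈ Fac}; that is, there exists an integer x with x ≡ m (mod n) and x ∉ ⋃_{i=1}^{p} {k_i + l_i·c : c ∈ Fac}. -/
/-- Let `Fac = {a! : a ∈ ℕ}` be the set of factorials. For every `n ≥ 1`, every integer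
`m`, and every finite family of pairs of integers `(kᵢ, lᵢ)`, the coset `m + nℤ` is not
contained in `⋃ᵢ {kᵢ + lᵢ·c : c ∈ Fac}`: there is an integer `x` with `x ≡ m (mod n)`
avoiding all the sets `{kᵢ + lᵢ·c : c ∈ Fac}`. -/
theorem coset_not_covered_by_factorials :
    ∀ (n : ℕ), 1 ≤ n → ∀ (m : ℤ) (p : ℕ) (k l : Fin p → ℤ),
      ∃ x : ℤ, x ≡ m [ZMOD (n : ℤ)] ∧
        ∀ i : Fin p, ∀ c ∈ {c : ℕ | ∃ a : ℕ, c = Nat.factorial a},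
          x ≠ k i + l i * (c : ℤ) := by
  intro n hn m p k l
  set K : ℕ := Finset.univ.sup (fun i => (k i).natAbs) with hK
  set L : ℕ := 1 + Finset.univ.sup (fun i => (l i).natAbs) with hL
  set a : ℕ := L + 2 * K + n with ha
  set x₀ : ℤ := (L : ℤ) * (Nat.factorial a : ℤ) + (K : ℤ) + 1 with hx0
  set x : ℤ := x₀ + (m - x₀) % n with hx
  have hmod : x ≡ m [ZMOD (n : ℤ)] := by
    calc x ≡ x₀ + (m - x₀) [ZMOD (n : ℤ)] :=
          Int.ModEq.add_left _ (Int.emod_emod_of_dvd _ dvd_rfl)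
      _ = m := by ring
  refine ⟨x, hmod, ?_⟩
  intro i c hc hxeq
  obtain ⟨b, rfl⟩ := hc
  have hfac1 : (1 : ℤ) ≤ (Nat.factorial a : ℤ) := by
    exact_mod_cast Nat.one_le_iff_ne_zero.mpr (Nat.factorial_ne_zero a)
  have hKi : |k i| ≤ (K : ℤ) := by
    have h := Finset.le_sup (f := fun i => (k i).natAbs) (Finset.mem_univ i)
    rw [Int.abs_eq_natAbs]
    exact_mod_cast h
  have hLi : |l i| ≤ (L : ℤ) := by
    have h := Finset.le_sup (f := fun i => (l i).natAbs) (Finset.mem_univ i)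
    rw [Int.abs_eq_natAbs]
    have : ((l i).natAbs : ℤ) ≤ (L : ℤ) := by
      have : (l i).natAbs ≤ L := le_trans h (Nat.le_add_left _ 1)
      exact_mod_cast this
    exact this
  have hr0 : 0 ≤ (m - x₀) % n := Int.emod_nonneg _ (by positivity)
  have hrn : (m - x₀) % n < (n : ℤ) := Int.emod_lt_of_pos _ (by exact_mod_cast hn)
  have hxlow : (L : ℤ) * (Nat.factorial a : ℤ) + (K : ℤ) < x := by
    rw [hx, hx0]; linarith
  have hxhigh : x + (K : ℤ) < (Nat.factorial (a + 1) : ℤ) := by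
    have hfe : (Nat.factorial (a + 1) : ℤ) = ((a : ℤ) + 1) * (Nat.factorial a : ℤ) := by
      push_cast [Nat.factorial_succ]; ring
    have haZ : (a : ℤ) = (L : ℤ) + 2 * (K : ℤ) + (n : ℤ) := by
      rw [ha]; push_cast; ring
    rw [hfe, haZ, hx, hx0]
    nlinarith [hfac1, hrn]
  -- x - k i is positive and bigger than L * a!
  have hgap : (L : ℤ) * (Nat.factorial a : ℤ) < x - k i := by
    have : k i ≤ (K : ℤ) := le_trans (le_abs_self _) hKi
    linarith
  have hpos : 0 < x - k i := by
    have hL1 : (1 : ℤ) ≤ (L : ℤ) := by exact_mod_cast Nat.le_add_right 1 _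
    nlinarith
  rcases le_or_gt b a with hb | hb
  · -- small factorial: |l i * b!| ≤ L * a!
    have hble : (Nat.factorial b : ℤ) ≤ (Nat.factorial a : ℤ) := by
      exact_mod_cast Nat.factorial_le hb
    have habs : |l i * (Nat.factorial b : ℤ)| ≤ (L : ℤ) * (Nat.factorial a : ℤ) := by
      rw [abs_mul, abs_of_nonneg (by positivity : (0:ℤ) ≤ (Nat.factorial b : ℤ))]
      exact mul_le_mul hLi hble (by positivity) (by positivity)
    have : l i * (Nat.factorial b : ℤ) ≤ (L : ℤ) * (Nat.factorial a : ℤ) :=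
      le_trans (le_abs_self _) habs
    have hxki : x - k i = l i * (Nat.factorial b : ℤ) := by linarith [hxeq.ge, hxeq.le]
    linarith [hgap, hxki ▸ this]
  · -- big factorial: l i * b! ≥ (a+1)! since l i ≠ 0 forced by positivity
    have hxki : x - k i = l i * (Nat.factorial b : ℤ) := by
      rw [hxeq]; ring
    have hlpos : 0 < l i * (Nat.factorial b : ℤ) := hxki ▸ hpos
    have hl1 : (1 : ℤ) ≤ |l i| := by
      rcases eq_or_ne (l i) 0 with h0 | h0
      · simp [h0] at hlpos
      · exact Int.one_le_abs (by exact_mod_cast h0)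
    have hble : (Nat.factorial (a + 1) : ℤ) ≤ (Nat.factorial b : ℤ) := by
      exact_mod_cast Nat.factorial_le hb
    have : (Nat.factorial (a + 1) : ℤ) ≤ l i * (Nat.factorial b : ℤ) := by
      calc (Nat.factorial (a + 1) : ℤ) ≤ (Nat.factorial b : ℤ) := hble
        _ = 1 * (Nat.factorial b : ℤ) := by ring
        _ ≤ |l i| * (Nat.factorial b : ℤ) := by
            exact mul_le_mul_of_nonneg_right hl1 (by positivity)
        _ = |l i * (Nat.factorial b : ℤ)| := by
            rw [abs_mul, abs_of_nonneg (by positivity : (0:ℤ) ≤ (Nat.factorial b : ℤ))]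
        _ = l i * (Nat.factorial b : ℤ) := abs_of_pos hlpos
    have hk : -(K : ℤ) ≤ k i := by
      have := neg_abs_le (k i); linarith [hKi]
    linarith [hxhigh, hxki]
end

section
/- Let r ≥ 1, let c₁,…,c_r be integers with c₁ ≠ 0, and let s₁ > s₂ > … > s_r be natural numbers with s₁ > ∑_{j=2}^{r} |c_j|. Then c₁·s₁! + c₂·s₂! + … + c_r·s_r! ≠ 0. -/
open Finset

/-- Let `c₁, …, c_r` be integers with `c₁ ≠ 0`, and let `s₁ > s₂ > … > s_r` be natural
numbers with `s₁ > ∑_{j=2}^{r} |c_j|`. Then `c₁·s₁! + … + c_r·s_r! ≠ 0`. -/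
theorem factorial_combination_ne_zero (r : ℕ) (hr : 1 ≤ r)
    (c : Fin r → ℤ) (hc : c ⟨0, hr⟩ ≠ 0)
    (s : Fin r → ℕ) (hs : ∀ i j : Fin r, i < j → s j < s i)
    (hbig : ∑ j ∈ univ.erase ⟨0, hr⟩, |c j| < (s ⟨0, hr⟩ : ℤ)) :
    ∑ i, c i * (Nat.factorial (s i) : ℤ) ≠ 0 := by
  intro h
  set z : Fin r := ⟨0, hr⟩ with hz
  have hpos : (0 : ℤ) < (s z : ℤ) :=
    lt_of_le_of_lt (Finset.sum_nonneg fun i _ => abs_nonneg _) hbig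
  have hszpos : 0 < s z := by exact_mod_cast hpos
  have hsplit : c z * (Nat.factorial (s z) : ℤ)
      + ∑ i ∈ univ.erase z, c i * (Nat.factorial (s i) : ℤ) = 0 := by
    exact (Finset.add_sum_erase univ (fun i => c i * (Nat.factorial (s i) : ℤ))
      (mem_univ z)).trans h
  have heq : c z * (Nat.factorial (s z) : ℤ)
      = -∑ i ∈ univ.erase z, c i * (Nat.factorial (s i) : ℤ) := by linarith
  have hle : ∀ i ∈ univ.erase z,
      |c i * (Nat.factorial (s i) : ℤ)| ≤ |c i| * (Nat.factorial (s z - 1) : ℤ) := by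
    intro i hi
    rcases Finset.mem_erase.mp hi with ⟨hne, _⟩
    have hzi : z < i := by
      have : 0 < i.val := Nat.pos_of_ne_zero fun h0 => hne (Fin.ext h0)
      exact this
    have hsi : s i < s z := hs z i hzi
    have hfac : Nat.factorial (s i) ≤ Nat.factorial (s z - 1) :=
      Nat.factorial_le (by omega)
    rw [abs_mul, abs_of_nonneg (by positivity : (0:ℤ) ≤ (Nat.factorial (s i) : ℤ))]
    exact mul_le_mul_of_nonneg_left (by exact_mod_cast hfac) (abs_nonneg _)
  have habs : |∑ i ∈ univ.erase z, c i * (Nat.factorial (s i) : ℤ)|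
      ≤ (∑ i ∈ univ.erase z, |c i|) * (Nat.factorial (s z - 1) : ℤ) := by
    calc |∑ i ∈ univ.erase z, c i * (Nat.factorial (s i) : ℤ)|
        ≤ ∑ i ∈ univ.erase z, |c i * (Nat.factorial (s i) : ℤ)| :=
          Finset.abs_sum_le_sum_abs _ _
      _ ≤ ∑ i ∈ univ.erase z, |c i| * (Nat.factorial (s z - 1) : ℤ) :=
          Finset.sum_le_sum hle
      _ = (∑ i ∈ univ.erase z, |c i|) * (Nat.factorial (s z - 1) : ℤ) :=
          (Finset.sum_mul _ _ _).symm
  have hmul : (s z : ℤ) * (Nat.factorial (s z - 1) : ℤ) = (Nat.factorial (s z) : ℤ) := by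
    exact_mod_cast Nat.mul_factorial_pred hszpos.ne'
  have hfacpos : (0 : ℤ) < (Nat.factorial (s z - 1) : ℤ) := by positivity
  have hcz : (1 : ℤ) ≤ |c z| := Int.one_le_abs (by exact_mod_cast hc)
  have : (Nat.factorial (s z) : ℤ) < (Nat.factorial (s z) : ℤ) := by
    calc (Nat.factorial (s z) : ℤ)
        ≤ |c z| * (Nat.factorial (s z) : ℤ) := by nlinarith [Nat.factorial_pos (s z)]
      _ = |c z * (Nat.factorial (s z) : ℤ)| := by
          rw [abs_mul, abs_of_nonneg (by positivity : (0:ℤ) ≤ (Nat.factorial (s z) : ℤ))]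
      _ = |∑ i ∈ univ.erase z, c i * (Nat.factorial (s i) : ℤ)| := by rw [heq, abs_neg]
      _ ≤ (∑ i ∈ univ.erase z, |c i|) * (Nat.factorial (s z - 1) : ℤ) := habs
      _ < (s z : ℤ) * (Nat.factorial (s z - 1) : ℤ) :=
          mul_lt_mul_of_pos_right hbig hfacpos
      _ = (Nat.factorial (s z) : ℤ) := hmul
  exact lt_irrefl _ this
end

section
/- Let n ≥ 1, let k₁,…,k_n be integers, and let ~ be an equivalence relation on {1,…,n}. Let X be the set of all tuples (m₁,…,m_n) of natural numbers such that (m_i = m_j if and only if i ~ j, for all i,j) and k₁·m₁! + … + k_n·m_n! = 0. If for some index i₀ the set {m_{i₀} : (m₁,…,m_n) ∈ X} is infinite, then ∑_{i ~ i₀} k_i = 0. -/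
open Finset Classical

attribute [local instance] Classical.propDecidable

/-- Let `k₁, …, kₙ` be integers and `~` an equivalence relation on `{1, …, n}`. Let `X`
be the set of tuples `(m₁, …, mₙ)` of naturals with `mᵢ = mⱼ ↔ i ~ j` (for all `i, j`)
and `k₁·m₁! + … + kₙ·mₙ! = 0`. If for some index `i₀` the set of values
`{m_{i₀} : m ∈ X}` is infinite, then `∑_{i ~ i₀} kᵢ = 0`. -/
theorem sum_over_class_eq_zero_of_infinite_projection (n : ℕ) (hn : 1 ≤ n)
    (k : Fin n → ℤ) (R : Fin n → Fin n → Prop) (hR : Equivalence R) (i₀ : Fin n)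
    (hinf : {v : ℕ | ∃ m : Fin n → ℕ,
        ((∀ i j, m i = m j ↔ R i j) ∧ ∑ i, k i * (Nat.factorial (m i) : ℤ) = 0) ∧
        v = m i₀}.Infinite) :
    ∑ i ∈ univ.filter (fun i => R i i₀), k i = 0 := by
  by_contra hK
  set K := ∑ i ∈ univ.filter (fun i => R i i₀), k i with hKdef
  set B : ℕ := ∑ i, (k i).natAbs with hBdef
  obtain ⟨v, hvS, hvbig⟩ := hinf.exists_gt (B + K.natAbs)
  obtain ⟨m, ⟨hm, hsum⟩, hv0⟩ := hvS
  have hBv : B < v := by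
    have : 1 ≤ K.natAbs := Int.natAbs_pos.mpr hK
    omega
  have hKv : K.natAbs < v + 1 := by omega
  have hset : univ.filter (fun i => m i = v) = univ.filter (fun i => R i i₀) := by
    apply Finset.filter_congr
    intro i _
    rw [← hm i i₀, hv0]
  have h1 : ∑ i ∈ univ.filter (fun i => m i = v), k i * (Nat.factorial (m i) : ℤ)
      = K * (Nat.factorial v : ℤ) := by
    rw [hKdef, ← hset, Finset.sum_mul]
    apply Finset.sum_congr rfl
    intro i hi
    rw [(Finset.mem_filter.mp hi).2]
  set G : ℤ := ∑ i ∈ univ.filter (fun i => v < m i), k i * (Nat.factorial (m i) : ℤ)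
    with hGdef
  set S : ℤ := ∑ i ∈ univ.filter (fun i => m i < v), k i * (Nat.factorial (m i) : ℤ)
    with hSdef
  have hsplit : K * (Nat.factorial v : ℤ) + G + S = 0 := by
    have e1 := Finset.sum_filter_add_sum_filter_not univ (fun i => m i = v)
      (fun i => k i * (Nat.factorial (m i) : ℤ))
    have e2 := Finset.sum_filter_add_sum_filter_not (univ.filter (fun i => ¬ m i = v))
      (fun i => v < m i) (fun i => k i * (Nat.factorial (m i) : ℤ))
    rw [Finset.filter_filter, Finset.filter_filter] at e2
    have eG : univ.filter (fun i => ¬ m i = v ∧ v < m i)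
        = univ.filter (fun i => v < m i) := by
      apply Finset.filter_congr
      intro i _
      constructor
      · intro h; exact h.2
      · intro h; exact ⟨by omega, h⟩
    have eS : univ.filter (fun i => ¬ m i = v ∧ ¬ v < m i)
        = univ.filter (fun i => m i < v) := by
      apply Finset.filter_congr
      intro i _
      constructor
      · intro h; omega
      · intro h; omega
    rw [eG, eS] at e2
    rw [← hsum, ← e1, h1, ← e2]
    ring
  have hGdvd : ((v + 1 : ℕ) * (Nat.factorial v : ℕ) : ℤ) ∣ G := by
    apply Finset.dvd_sum
    intro i hi
    have hvi : v + 1 ≤ m i := (Finset.mem_filter.mp hi).2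
    apply Dvd.dvd.mul_left
    have : (v + 1) * Nat.factorial v ∣ Nat.factorial (m i) := by
      rw [← Nat.factorial_succ]
      exact Nat.factorial_dvd_factorial hvi
    exact_mod_cast Int.natCast_dvd_natCast.mpr this
  have hvfac_dvd_G : ((Nat.factorial v : ℕ) : ℤ) ∣ G :=
    dvd_trans ⟨(v + 1 : ℕ), by push_cast; ring⟩ hGdvd
  have hSdvd : ((Nat.factorial v : ℕ) : ℤ) ∣ S := by
    have : S = -(K * (Nat.factorial v : ℤ) + G) := by linarith
    rw [this]
    exact dvd_neg.mpr (dvd_add (Dvd.intro_left _ rfl) hvfac_dvd_G)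
  have hSbound : |S| < ((Nat.factorial v : ℕ) : ℤ) := by
    calc |S| ≤ ∑ i ∈ univ.filter (fun i => m i < v),
        |k i * (Nat.factorial (m i) : ℤ)| := Finset.abs_sum_le_sum_abs _ _
      _ ≤ ∑ i ∈ univ.filter (fun i => m i < v),
          (|k i| * (Nat.factorial (v - 1) : ℤ)) := by
        apply Finset.sum_le_sum
        intro i hi
        rw [abs_mul]
        apply mul_le_mul_of_nonneg_left _ (abs_nonneg _)
        have h1 : Nat.factorial (m i) ≤ Nat.factorial (v - 1) :=
          Nat.factorial_le (by have := (Finset.mem_filter.mp hi).2; omega)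
        rw [abs_of_nonneg (by positivity)]
        exact_mod_cast h1
      _ ≤ ∑ i, (|k i| * (Nat.factorial (v - 1) : ℤ)) := by
        apply Finset.sum_le_sum_of_subset_of_nonneg (Finset.filter_subset _ _)
        intro i _ _
        positivity
      _ = (B : ℤ) * (Nat.factorial (v - 1) : ℤ) := by
        rw [← Finset.sum_mul, hBdef]
        congr 1
        rw [Nat.cast_sum]
        apply Finset.sum_congr rfl
        intro i _
        rw [Int.abs_eq_natAbs]
      _ < ((Nat.factorial v : ℕ) : ℤ) := by
        have hv1 : v = (v - 1) + 1 := by omega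
        have : Nat.factorial v = v * Nat.factorial (v - 1) := by
          conv_lhs => rw [hv1]
          rw [Nat.factorial_succ, ← hv1]
        rw [this]
        push_cast
        apply mul_lt_mul_of_pos_right
        · exact_mod_cast hBv
        · exact_mod_cast Nat.factorial_pos (v - 1)
  have hS0 : S = 0 := Int.eq_zero_of_abs_lt_dvd hSdvd hSbound
  have hKG : K * (Nat.factorial v : ℤ) = -G := by linarith
  have hdvdK : ((v + 1 : ℕ) : ℤ) ∣ K := by
    have h2 : ((v + 1 : ℕ) * (Nat.factorial v : ℕ) : ℤ) ∣ K * (Nat.factorial v : ℤ) := by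
      rw [hKG]; exact dvd_neg.mpr hGdvd
    have hfacne : ((Nat.factorial v : ℕ) : ℤ) ≠ 0 := by
      exact_mod_cast (Nat.factorial_pos v).ne'
    rcases h2 with ⟨c, hc⟩
    refine ⟨c, ?_⟩
    push_cast at hc ⊢
    have : (K : ℤ) * (Nat.factorial v : ℤ) = ((v : ℤ) + 1) * c * (Nat.factorial v : ℤ) := by
      rw [hc]; ring
    exact mul_right_cancel₀ hfacne this
  have : K = 0 := by
    apply Int.eq_zero_of_abs_lt_dvd hdvdK
    rw [Int.abs_eq_natAbs]
    exact_mod_cast hKv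
  exact hK this
end
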